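/- Let m and y be integers with m ≥ 4 and 1 ≤ y ≤ ⌊(m-2)/2⌋. Then L_{m-4y-1} ≤ L_{m-5} and L_{m-4y} ≥ -L_{m-6}, where L denotes the Lucas sequence extended to all integer indices. -/

import Mathlib

theorem stmt_17 (L : ℤ → ℤ)
    (hL1 : L 1 = 1) (hL2 : L 2 = 3)
    (hLrec : ∀ n : ℤ, L (n + 2) = L (n + 1) + L n)
    (m y : ℤ) (hm : 4 ≤ m) (hy1 : 1 ≤ y) (hy2 : y ≤ (m - 2) / 2) :
    L (m - 4 * y - 1) ≤ L (m - 5) ∧ -L (m - 6) ≤ L (m - 4 * y) := by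
  have hL0 : L 0 = 2 := by have := hLrec 0; norm_num at this; linarith
  have hLm1 : L (-1) = -1 := by have := hLrec (-1); norm_num at this; linarith
  have hLm2 : L (-2) = 3 := by have := hLrec (-2); norm_num at this; linarith
  have hL3 : L 3 = 4 := by have := hLrec 1; norm_num at this; linarith
  have hL4 : L 4 = 7 := by have := hLrec 2; norm_num at this; linarith
  have hpm : ∀ n : ℤ, 1 ≤ n → 1 ≤ L n ∧ L n ≤ L (n + 1) := by
    intro n hn
    refine Int.le_induction (motive := fun n _ => 1 ≤ L n ∧ L n ≤ L (n + 1)) ?_ ?_ n hn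
    · norm_num [hL1, hL2]
    · intro n hn ih
      have h := hLrec n
      have h2 : L (n + 1 + 1) = L (n + 1) + L n := by
        rw [show n + 1 + 1 = n + 2 by ring]; exact h
      exact ⟨by linarith [ih.1, ih.2], by linarith [ih.1, ih.2]⟩
  have hpos : ∀ n : ℤ, 1 ≤ n → 1 ≤ L n := fun n hn => (hpm n hn).1
  have hmono : ∀ a b : ℤ, 1 ≤ a → a ≤ b → L a ≤ L b := by
    intro a b ha hab
    refine Int.le_induction (motive := fun b _ => L a ≤ L b) ?_ ?_ b hab
    · exact le_refl _
    · intro n hn ih; exact le_trans ih (hpm n (le_trans ha hn)).2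
  have hneg : ∀ t : ℤ, 0 ≤ t →
      L (-(2 * t)) = L (2 * t) ∧ L (-(2 * t + 1)) = -L (2 * t + 1) := by
    intro t ht
    refine Int.le_induction (motive := fun t _ => L (-(2 * t)) = L (2 * t) ∧ L (-(2 * t + 1)) = -L (2 * t + 1)) ?_ ?_ t ht
    · norm_num [hL1, hLm1]
    · intro t ht ih
      have e1 := hLrec (-(2 * t) - 2)
      have e2 := hLrec (-(2 * t) - 3)
      have e3 := hLrec (2 * t)
      have e4 := hLrec (2 * t + 1)
      obtain ⟨i1, i2⟩ := ih
      ring_nf at e1 e2 e3 e4 i1 i2 ⊢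
      constructor <;> linarith
  have h2y : 2 * y ≤ m - 2 := by omega
  constructor
  · -- L (m - 4y - 1) ≤ L (m - 5)
    set k := m - 4 * y - 1 with hk
    rcases lt_or_ge k 0 with hkneg | hk0
    · rcases Int.even_or_odd (-k) with ⟨t, ht⟩ | ⟨t, ht⟩
      · have hLk : L k = L (2 * t) := by
          rw [show k = -(2 * t) by omega]; exact (hneg t (by omega)).1
        rw [hLk]; exact hmono _ _ (by omega) (by omega)
      · have hLk : L k = -L (2 * t + 1) := by
          rw [show k = -(2 * t + 1) by omega]; exact (hneg t (by omega)).2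
        rcases (show m - 5 = -1 ∨ 1 ≤ m - 5 by omega) with h5 | h5
        · have ht0 : t = 0 := by omega
          rw [h5, hLm1, hLk, ht0]; norm_num [hL1]
        · have h1 := hpos (2 * t + 1) (by omega)
          have h2 := hpos (m - 5) h5
          linarith
    · rcases eq_or_lt_of_le hk0 with h0 | h1
      · rcases (show m - 5 = 0 ∨ 4 ≤ m - 5 by omega) with h5 | h5
        · rw [← h0, h5]
        · have := hmono 4 (m - 5) (by norm_num) h5
          rw [← h0, hL0]; linarith
      · exact hmono _ _ (by omega) (by omega)
  · -- -L (m - 6) ≤ L (m - 4y)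
    set j := m - 4 * y with hj
    rcases lt_or_ge j 0 with hjneg | hj0
    · rcases Int.even_or_odd (-j) with ⟨t, ht⟩ | ⟨t, ht⟩
      · have hLj : L j = L (2 * t) := by
          rw [show j = -(2 * t) by omega]; exact (hneg t (by omega)).1
        have h1 : 1 ≤ L (2 * t) := hpos _ (by omega)
        have h2 : 1 ≤ L (m - 6) := by
          rcases (show m - 6 = 0 ∨ 1 ≤ m - 6 by omega) with h6 | h6
          · rw [h6, hL0]; norm_num
          · exact hpos _ h6
        linarith
      · have hLj : L j = -L (2 * t + 1) := by
          rw [show j = -(2 * t + 1) by omega]; exact (hneg t (by omega)).2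
        have hle : L (2 * t + 1) ≤ L (m - 6) := hmono _ _ (by omega) (by omega)
        linarith
    · have hLjge : 1 ≤ L j := by
        rcases eq_or_lt_of_le hj0 with h | h
        · rw [← h, hL0]; norm_num
        · exact hpos _ (by omega)
      have hn : -1 ≤ L (m - 6) := by
        rcases (show m - 6 = -2 ∨ m - 6 = -1 ∨ m - 6 = 0 ∨ 1 ≤ m - 6 by omega) with h|h|h|h
        · rw [h, hLm2]; norm_num
        · rw [h, hLm1]
        · rw [h, hL0]; norm_num
        · linarith [hpos _ h]
      linarith
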